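/- Let H be a Hopf algebra over a field k equipped with an exhaustive increasing filtration k = H₀ ⊆ H₁ ⊆ ⋯ by k-subspaces with H = ⋃ₙ Hₙ and Δ(Hₙ) ⊆ Σ_{i=0}^{n} Hᵢ ⊗ H_{n−i}. Let W be a finite-dimensional left H-comodule with coaction ρ: W → H ⊗ W, and define Wₖ = ρ⁻¹(Hₖ ⊗ W). Then each Wₖ is an H-subcomodule of W, i.e., ρ(Wₖ) ⊆ H ⊗ Wₖ. -/

import Mathlib

noncomputable section

open TensorProduct

variable {k : Type} [Field k]

/-- Reconstruction of a tensor from basis coordinates on the left factor. -/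
lemma tensor_repr_left {V N : Type} [AddCommGroup V] [Module k V]
    [AddCommGroup N] [Module k N] {ι : Type} [Fintype ι] (b : Module.Basis ι k V)
    (ξ : V ⊗[k] N) :
    ξ = ∑ i, b i ⊗ₜ[k] (TensorProduct.lid k N (LinearMap.rTensor N (b.coord i) ξ)) := by
  induction ξ using TensorProduct.induction_on with
  | zero => simp
  | tmul v n =>
      simp only [LinearMap.rTensor_tmul, lid_tmul]
      calc v ⊗ₜ[k] n = (∑ i, b.coord i v • b i) ⊗ₜ[k] n := by
            conv_lhs => rw [← Module.Basis.sum_repr b v]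
            simp [Module.Basis.coord_apply]
        _ = ∑ i, b i ⊗ₜ[k] (b.coord i v • n) := by
            rw [sum_tmul]; apply Finset.sum_congr rfl; intros; rw [smul_tmul]
  | add x y hx hy =>
      simp only [map_add, tmul_add]
      rw [Finset.sum_add_distrib]
      nth_rewrite 1 [hx, hy]
      rfl

lemma exists_dual_family {H : Type} [AddCommGroup H] [Module k H] {ι : Type}
    (h : ι → H) (hli : LinearIndependent k h) (t : ι) :
    ∃ φ : H →ₗ[k] k, φ (h t) = 1 ∧ ∀ s, s ≠ t → φ (h s) = 0 := by
  have hnm : h t ∉ Submodule.span k (h '' {t}ᶜ) :=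
    hli.notMem_span_image (by simp)
  obtain ⟨f, hf1, hf2⟩ :=
    (Submodule.span k (h '' {t}ᶜ)).exists_dual_map_eq_bot_of_notMem hnm inferInstance
  refine ⟨(f (h t))⁻¹ • f, by simp [inv_mul_cancel₀ hf1], fun s hs => ?_⟩
  have : f (h s) = 0 := by
    have : f (h s) ∈ Submodule.map f (Submodule.span k (h '' {t}ᶜ)) :=
      Submodule.mem_map_of_mem (Submodule.subset_span ⟨s, by simpa using hs, rfl⟩)
    rw [hf2] at this; simpa using this
  simp [this]

variable (k : Type) [Field k]
variable (H : Type) [Ring H] [HopfAlgebra k H]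
variable (W : Type) [AddCommGroup W] [Module k W]

/-- The induced filtration `Wⱼ = ρ⁻¹(Hⱼ ⊗ W)` on a comodule `(W, ρ)`. -/
def filtW (Hf : ℕ → Submodule k H) (ρ : W →ₗ[k] H ⊗[k] W) (j : ℕ) : Submodule k W :=
  Submodule.comap ρ (LinearMap.range (LinearMap.rTensor W (Hf j).subtype))

/-- Let `H` be a Hopf algebra over a field `k` with an exhaustive increasing filtration
`k = H₀ ⊆ H₁ ⊆ ⋯` satisfying `Δ(Hₙ) ⊆ Σᵢ Hᵢ ⊗ H_{n−i}`, and let `W` be a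
finite-dimensional left `H`-comodule with coaction `ρ`.  Then each
`Wⱼ = ρ⁻¹(Hⱼ ⊗ W)` is a subcomodule: `ρ(Wⱼ) ⊆ H ⊗ Wⱼ`. -/
theorem filtW_is_subcomodule
    [FiniteDimensional k W]
    (Hf : ℕ → Submodule k H)
    (h0 : Hf 0 = Submodule.span k {1})
    (hmono : Monotone Hf)
    (hexh : ∀ x : H, ∃ n, x ∈ Hf n)
    (hcomul : ∀ n : ℕ, ∀ x ∈ Hf n,
      Coalgebra.comul (R := k) x ∈
        ⨆ i ∈ Finset.range (n + 1),
          LinearMap.range (TensorProduct.map (Hf i).subtype (Hf (n - i)).subtype))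
    (ρ : W →ₗ[k] H ⊗[k] W)
    (hcoassoc : ∀ w : W,
      (TensorProduct.assoc k H H W)
          ((LinearMap.rTensor W (Coalgebra.comul (R := k))) (ρ w)) =
        (LinearMap.lTensor H ρ) (ρ w))
    (hcounit : ∀ w : W,
      (TensorProduct.lid k W)
          ((LinearMap.rTensor W (Coalgebra.counit (R := k))) (ρ w)) = w) :
    ∀ j : ℕ, ∀ w ∈ filtW k H W Hf ρ j,
      ρ w ∈ LinearMap.range (LinearMap.lTensor H (filtW k H W Hf ρ j).subtype) := by
  intro j w hw
  obtain ⟨ξ, hξ⟩ := hw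
  obtain ⟨S, hS⟩ := TensorProduct.exists_finset ξ
  -- the span of the first components, a finite-dimensional subspace of `Hf j`
  set V : Submodule k H :=
    Submodule.span k ((fun p : (Hf j) × W => ((p.1 : H))) '' S) with hV
  have hVle : V ≤ Hf j := by
    rw [hV, Submodule.span_le]
    rintro x ⟨p, _, rfl⟩
    exact p.1.2
  haveI : Module.Finite k V :=
    Module.Finite.span_of_finite k ((S.finite_toSet).image _)
  -- a lift of `ρ w` to `V ⊗ W`
  set ζ : V ⊗[k] W := ∑ p ∈ S.attach,
      (⟨((p : (Hf j) × W).1 : H), Submodule.subset_span ⟨p.1, p.2, rfl⟩⟩ : V) ⊗ₜ[k]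
        (p : (Hf j) × W).2
    with hζdef
  have hζ : LinearMap.rTensor W V.subtype ζ = ρ w := by
    rw [← hξ, hS, hζdef, map_sum, map_sum, ← Finset.sum_attach S
      (fun p => (LinearMap.rTensor W (Hf j).subtype) (p.1 ⊗ₜ[k] p.2))]
    simp [LinearMap.rTensor_tmul]
  set b := Module.finBasis k V with hb
  set hfam : Fin (Module.finrank k V) → H := fun i => ((b i : V) : H) with hhfam
  set v : Fin (Module.finrank k V) → W :=
    fun i => TensorProduct.lid k W (LinearMap.rTensor W (b.coord i) ζ) with hv
  have hρw : ρ w = ∑ i, hfam i ⊗ₜ[k] v i := by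
    rw [← hζ]
    conv_lhs => rw [tensor_repr_left b ζ]
    rw [map_sum]
    simp [LinearMap.rTensor_tmul, hhfam, hv]
  have hli : LinearIndependent k hfam :=
    (b.linearIndependent).map' V.subtype V.ker_subtype
  have hmemHf : ∀ i, hfam i ∈ Hf j := fun i => hVle (b i).2
  -- main claim: each `v t` lies in `filtW j`
  have hvt : ∀ t, v t ∈ filtW k H W Hf ρ j := by
    intro t
    obtain ⟨φ, hφ1, hφ0⟩ := exists_dual_family hfam hli t
    set G : H ⊗[k] H →ₗ[k] H :=
      (TensorProduct.lid k H).toLinearMap ∘ₗ LinearMap.rTensor H φ with hG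
    set F : H ⊗[k] (H ⊗[k] W) →ₗ[k] H ⊗[k] W :=
      (TensorProduct.lid k (H ⊗[k] W)).toLinearMap ∘ₗ LinearMap.rTensor (H ⊗[k] W) φ with hF
    have hFA : F ∘ₗ (TensorProduct.assoc k H H W).toLinearMap = LinearMap.rTensor W G := by
      apply TensorProduct.ext_threefold
      intro a c d
      simp [hF, hG, LinearMap.rTensor_tmul, smul_tmul']
    -- image of comultiplication under G stays in `Hf j`
    have hGmem : ∀ i, G (Coalgebra.comul (R := k) (hfam i)) ∈ Hf j := by
      intro i
      have key : (⨆ i' ∈ Finset.range (j + 1),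
          LinearMap.range (TensorProduct.map (Hf i').subtype (Hf (j - i')).subtype)) ≤
          Submodule.comap G (Hf j) := by
        refine iSup₂_le fun i' _ => ?_
        rw [TensorProduct.range_map_eq_span_tmul, Submodule.span_le]
        rintro x ⟨a, c, rfl⟩
        simp only [SetLike.mem_coe, Submodule.mem_comap, hG, LinearMap.coe_comp,
          Function.comp_apply, LinearMap.rTensor_tmul, LinearEquiv.coe_coe, lid_tmul,
          Submodule.coe_subtype]
        exact (Hf j).smul_mem _ (hmono (Nat.sub_le j i') c.2)
      exact key (hcomul j _ (hmemHf i))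
    -- compute ρ (v t)
    have hmain : ρ (v t) = ∑ i, G (Coalgebra.comul (R := k) (hfam i)) ⊗ₜ[k] v i := by
      have h1 := congrArg F (hcoassoc w)
      have hL : F ((TensorProduct.assoc k H H W)
          ((LinearMap.rTensor W (Coalgebra.comul (R := k))) (ρ w))) =
          ∑ i, G (Coalgebra.comul (R := k) (hfam i)) ⊗ₜ[k] v i := by
        have := LinearMap.congr_fun hFA
          ((LinearMap.rTensor W (Coalgebra.comul (R := k))) (ρ w))
        simp only [LinearMap.coe_comp, Function.comp_apply, LinearEquiv.coe_coe] at this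
        rw [this, hρw, map_sum, map_sum]
        simp [LinearMap.rTensor_tmul]
      have hR : F ((LinearMap.lTensor H ρ) (ρ w)) = ρ (v t) := by
        rw [hρw, map_sum, map_sum]
        have : ∀ i, F ((LinearMap.lTensor H ρ) (hfam i ⊗ₜ[k] v i)) = φ (hfam i) • ρ (v i) := by
          intro i
          simp [hF, LinearMap.lTensor_tmul, LinearMap.rTensor_tmul]
        rw [Finset.sum_congr rfl fun i _ => this i]
        rw [Finset.sum_eq_single t (fun s _ hs => by rw [hφ0 s hs, zero_smul])
          (fun h => absurd (Finset.mem_univ t) h)]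
        rw [hφ1, one_smul]
      rw [← hR, ← h1, hL]
    refine Submodule.mem_comap.2 ⟨∑ i, (⟨G (Coalgebra.comul (R := k) (hfam i)), hGmem i⟩ :
      Hf j) ⊗ₜ[k] v i, ?_⟩
    rw [map_sum, hmain]
    simp [LinearMap.rTensor_tmul]
  refine ⟨∑ i, hfam i ⊗ₜ[k] (⟨v i, hvt i⟩ : filtW k H W Hf ρ j), ?_⟩
  rw [map_sum, hρw]
  simp [LinearMap.lTensor_tmul]

end
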